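/- Let n ≥ 2 be an integer, let K₀ = (1/(1+(n−1)²))·((n−1)·ln(n−1) + π/2), and let F₁ : (−1/(n−1), +∞) → (−∞, K₀) be the bijection F₁(t) = (1/(1+(n−1)²))·[(n−1)·ln((1+(n−1)t)/√(1+t²)) + arctan t]. Then the inverse function w = F₁⁻¹ : (−∞, K₀) → (−1/(n−1), +∞) is differentiable and satisfies w'(s) = (1 + w(s)²)·(1 + (n−1)·w(s)) for every s ∈ (−∞, K₀), with lim_{s → −∞} w(s) = −1/(n−1) and lim_{s → K₀⁻} w(s) = +∞. -/

import Mathlib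

open Set Filter Real

private lemma F1_hasDerivAt (m : ℝ) (hm : 1 ≤ m) (F₁ : ℝ → ℝ)
    (hF : ∀ t : ℝ, F₁ t = (1 / (1 + m ^ 2)) *
      (m * Real.log ((1 + m * t) / Real.sqrt (1 + t ^ 2)) + Real.arctan t))
    (t : ℝ) (ht : 0 < 1 + m * t) :
    HasDerivAt F₁ (((1 + t ^ 2) * (1 + m * t))⁻¹) t := by
  have hm0 : (0:ℝ) < m := lt_of_lt_of_le one_pos hm
  have hsq : ∀ x : ℝ, (0:ℝ) < 1 + x ^ 2 := fun x => by positivity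
  set g : ℝ → ℝ := fun x => (1 / (1 + m ^ 2)) *
    (m * (Real.log (1 + m * x) - (1/2) * Real.log (1 + x ^ 2)) + Real.arctan x) with hg
  have heq : ∀ x : ℝ, 0 < 1 + m * x → F₁ x = g x := by
    intro x hx
    rw [hF x, hg]
    rw [Real.log_div (ne_of_gt hx) (ne_of_gt (Real.sqrt_pos.2 (hsq x))),
      Real.log_sqrt (le_of_lt (hsq x))]
    ring
  have hgderiv : HasDerivAt g (((1 + t ^ 2) * (1 + m * t))⁻¹) t := by
    have h1 : HasDerivAt (fun x : ℝ => 1 + m * x) m t := by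
      simpa using ((hasDerivAt_id t).const_mul m).const_add 1
    have h2 : HasDerivAt (fun x : ℝ => 1 + x ^ 2) (2 * t) t := by
      simpa using ((hasDerivAt_pow 2 t)).const_add 1
    have hlog1 : HasDerivAt (fun x : ℝ => Real.log (1 + m * x)) (m / (1 + m * t)) t := by
      simpa using h1.log (ne_of_gt ht)
    have hlog2 : HasDerivAt (fun x : ℝ => Real.log (1 + x ^ 2)) ((2 * t) / (1 + t ^ 2)) t := by
      simpa using h2.log (ne_of_gt (hsq t))
    have harc := Real.hasDerivAt_arctan t
    have := (((hlog1.sub (hlog2.const_mul (1/2 : ℝ))).const_mul m).add harc).const_mul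
      (1 / (1 + m ^ 2))
    refine this.congr_deriv ?_
    have hmsq : (0:ℝ) < 1 + m ^ 2 := by positivity
    field_simp
    ring
  apply hgderiv.congr_of_eventuallyEq
  have hc : Continuous (fun x : ℝ => 1 + m * x) := by continuity
  have hev : ∀ᶠ x : ℝ in nhds t, 0 < 1 + m * x :=
    (hc.tendsto t).eventually (eventually_gt_nhds ht)
  exact hev.mono fun x hx => heq x hx

/-- The inverse `w = F₁⁻¹ : (−∞, K₀) → (−1/(n−1), +∞)` of the first
integral `F₁` is differentiable, solves `w' = (1 + w²)(1 + (n−1)w)`, tends to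
`−1/(n−1)` at `−∞` and blows up to `+∞` at `K₀⁻`. -/
theorem inverse_first_integral_solves_ODE
    (n : ℕ) (hn : 2 ≤ n) (F₁ : ℝ → ℝ) (K₀ : ℝ)
    (hF : ∀ t : ℝ, F₁ t = (1 / (1 + ((n : ℝ) - 1) ^ 2)) *
      (((n : ℝ) - 1) * Real.log ((1 + ((n : ℝ) - 1) * t) / Real.sqrt (1 + t ^ 2))
        + Real.arctan t))
    (hK : K₀ = (1 / (1 + ((n : ℝ) - 1) ^ 2)) *
      (((n : ℝ) - 1) * Real.log ((n : ℝ) - 1) + Real.pi / 2))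
    (hBij : Set.BijOn F₁ (Set.Ioi (-1 / ((n : ℝ) - 1))) (Set.Iio K₀))
    (w : ℝ → ℝ)
    (hwmaps : Set.MapsTo w (Set.Iio K₀) (Set.Ioi (-1 / ((n : ℝ) - 1))))
    (hwinv : Set.InvOn w F₁ (Set.Ioi (-1 / ((n : ℝ) - 1))) (Set.Iio K₀)) :
    (∀ s ∈ Set.Iio K₀,
      HasDerivAt w ((1 + w s ^ 2) * (1 + ((n : ℝ) - 1) * w s)) s) ∧
    Filter.Tendsto w Filter.atBot (nhds (-1 / ((n : ℝ) - 1))) ∧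
    Filter.Tendsto w (nhdsWithin K₀ (Set.Iio K₀)) Filter.atTop := by
  set m : ℝ := (n : ℝ) - 1 with hmdef
  have hm1 : (1:ℝ) ≤ m := by
    have : (2:ℝ) ≤ (n:ℝ) := by exact_mod_cast hn
    simp only [hmdef]; linarith
  have hm0 : (0:ℝ) < m := lt_of_lt_of_le one_pos hm1
  have hbd : -1 / m < 0 := by
    apply div_neg_of_neg_of_pos _ hm0; norm_num
  have hpos : ∀ t : ℝ, -1 / m < t → 0 < 1 + m * t := by
    intro t ht
    have h1 : m * (-1 / m) < m * t := mul_lt_mul_of_pos_left ht hm0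
    have h2 : m * (-1 / m) = -1 := by field_simp
    rw [h2] at h1
    linarith
  have hderiv : ∀ t ∈ Set.Ioi (-1 / m), HasDerivAt F₁ (((1 + t ^ 2) * (1 + m * t))⁻¹) t :=
    fun t ht => F1_hasDerivAt m hm1 F₁ hF t (hpos t ht)
  have hdpos : ∀ t ∈ Set.Ioi (-1 / m), 0 < ((1 + t ^ 2) * (1 + m * t))⁻¹ := by
    intro t ht
    have h1 : (0:ℝ) < 1 + t ^ 2 := by positivity
    exact inv_pos.2 (mul_pos h1 (hpos t ht))
  -- F₁ is strictly monotone on the domain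
  have hFmono : StrictMonoOn F₁ (Set.Ioi (-1 / m)) := by
    apply strictMonoOn_of_deriv_pos (convex_Ioi _)
    · exact fun t ht => (hderiv t ht).continuousAt.continuousWithinAt
    · intro t ht
      rw [interior_Ioi] at ht
      rw [(hderiv t ht).deriv]
      exact hdpos t ht
  -- comparison lemma for w
  have hwlt : ∀ s₁ ∈ Set.Iio K₀, ∀ s₂ ∈ Set.Iio K₀, s₁ < s₂ → w s₁ < w s₂ := by
    intro s₁ hs₁ s₂ hs₂ hlt
    by_contra h
    push_neg at h
    have := hFmono.monotoneOn (hwmaps hs₂) (hwmaps hs₁) h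
    rw [hwinv.2 hs₁, hwinv.2 hs₂] at this
    exact absurd this (not_le.2 hlt)
  have hwmono : StrictMonoOn w (Set.Iio K₀) := fun s₁ hs₁ s₂ hs₂ h => hwlt s₁ hs₁ s₂ hs₂ h
  -- w maps onto the full interval
  have hsurj : Set.Ioi (-1 / m) ⊆ w '' (Set.Iio K₀) := by
    intro t ht
    exact ⟨F₁ t, hBij.mapsTo ht, hwinv.1 ht⟩
  refine ⟨?_, ?_, ?_⟩
  · -- derivative
    intro s hs
    have htmem : w s ∈ Set.Ioi (-1 / m) := hwmaps hs
    have hcont : ContinuousAt w s := by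
      apply hwmono.continuousAt_of_image_mem_nhds (Iio_mem_nhds hs)
      exact mem_of_superset (Ioi_mem_nhds htmem) hsurj
    have hfg : ∀ᶠ x in nhds s, F₁ (w x) = x := by
      filter_upwards [Iio_mem_nhds hs] with x hx
      exact hwinv.2 hx
    have := HasDerivAt.of_local_left_inverse hcont (hderiv (w s) htmem)
      (ne_of_gt (hdpos (w s) htmem)) hfg
    rw [inv_inv] at this
    exact this
  · -- limit at -∞
    rw [tendsto_order]
    constructor
    · intro a ha
      filter_upwards [eventually_lt_atBot K₀] with s hs
      exact lt_trans ha (hwmaps hs)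
    · intro a ha
      set t : ℝ := (-1 / m + a) / 2 with htdef
      have ht1 : -1 / m < t := by rw [htdef]; linarith
      have ht2 : t < a := by rw [htdef]; linarith
      have hs₀ : F₁ t ∈ Set.Iio K₀ := hBij.mapsTo ht1
      filter_upwards [eventually_lt_atBot (F₁ t)] with s hs
      have hsK : s ∈ Set.Iio K₀ := lt_trans hs hs₀
      have : F₁ (w s) < F₁ t := by rw [hwinv.2 hsK]; exact hs
      have hwst : w s < t := by
        by_contra h
        push_neg at h
        exact absurd (hFmono.monotoneOn ht1 (hwmaps hsK) h) (not_le.2 this)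
      exact lt_trans hwst ht2
  · -- blow-up at K₀⁻
    rw [tendsto_atTop]
    intro a
    set t : ℝ := max a 0 with htdef
    have ht1 : -1 / m < t := lt_of_lt_of_le hbd (le_max_right a 0)
    have hs₀ : F₁ t ∈ Set.Iio K₀ := hBij.mapsTo ht1
    have hIoo : Set.Ioo (F₁ t) K₀ ∈ nhdsWithin K₀ (Set.Iio K₀) :=
      Ioo_mem_nhdsLT_of_mem ⟨hs₀, le_refl _⟩
    filter_upwards [hIoo] with s hs
    have hsK : s ∈ Set.Iio K₀ := hs.2
    have : F₁ t < F₁ (w s) := by rw [hwinv.2 hsK]; exact hs.1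
    have htw : t < w s := by
      by_contra h
      push_neg at h
      exact absurd (hFmono.monotoneOn (hwmaps hsK) ht1 h) (not_le.2 this)
    exact le_of_lt (lt_of_le_of_lt (le_max_left a 0) htw)
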